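/- Let X and Y be Tychonoff spaces such that (X, X) is a Grothendieck pair, and let f : X → Y be a continuous surjection. Then (Y, Y) is a Grothendieck pair. -/

import Mathlib

open Filter Topology Set

/-- A space is pseudocompact if every continuous real-valued function on it is bounded. -/
def IsPseudocompact (X : Type*) [TopologicalSpace X] : Prop :=
  ∀ f : X → ℝ, Continuous f → ∃ M : ℝ, ∀ x : X, |f x| ≤ M

/-- A function is quasicontinuous. -/
def QuasiContinuous {X Y : Type*} [TopologicalSpace X] [TopologicalSpace Y] (f : X → Y) : Prop :=
  ∀ x : X, ∀ V : Set Y, IsOpen V → f x ∈ V → ∀ U : Set X, IsOpen U → x ∈ U →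
    ∃ W : Set X, IsOpen W ∧ W.Nonempty ∧ W ⊆ U ∧ f '' W ⊆ V

/-- Separate continuity of a function of two variables. -/
def SeparatelyContinuous {X Y Z : Type*} [TopologicalSpace X] [TopologicalSpace Y]
    [TopologicalSpace Z] (f : X × Y → Z) : Prop :=
  (∀ x : X, Continuous fun y : Y => f (x, y)) ∧ (∀ y : Y, Continuous fun x : X => f (x, y))

/-- The space of continuous real-valued functions with the topology of pointwise
convergence, realized as a subspace of the product `Y → ℝ`. -/
def Cp (Y : Type*) [TopologicalSpace Y] : Type _ := {g : Y → ℝ // Continuous g}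

noncomputable instance (Y : Type*) [TopologicalSpace Y] : TopologicalSpace (Cp Y) :=
  instTopologicalSpaceSubtype

/-- `(X, Y)` is a Grothendieck pair if every continuous image of `X` in `C_p(Y)`
has compact closure in `C_p(Y)`. -/
def GrothendieckPair (X Y : Type*) [TopologicalSpace X] [TopologicalSpace Y] : Prop :=
  ∀ F : X → Cp Y, Continuous F → IsCompact (closure (Set.range F))

/-- `x` is a weak q-point relative to `A`. -/
def IsWeakQPoint {X : Type*} [TopologicalSpace X] (x : X) (A : Set X) : Prop :=
  ∃ φ : List (Set X) → Set X,
    (∀ l : List (Set X), (∀ U ∈ l, IsOpen U ∧ x ∈ U) →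
      φ l ⊆ A ∧ ∃ T : Set X, T.Countable ∧ φ l ⊆ closure T) ∧
    (∀ U : ℕ → Set X, (∀ i : ℕ, IsOpen (U i) ∧ x ∈ U i) →
      (closure (⋃ i : ℕ, φ ((List.range (i + 1)).map U)) ∩ ⋂ i : ℕ, U i).Nonempty)

/-- A weak `q_D`-space. -/
def IsWeakQDSpace (X : Type*) [TopologicalSpace X] : Prop :=
  ∃ D : Set X, Dense D ∧ ∀ A : Set X, A ⊆ D → ¬ IsClosed A → ∃ x : X, IsWeakQPoint x A

lemma aux_tendsto_of_abs_le_inv {v : ℕ → ℝ} {c C : ℝ} {N : ℕ}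
    (h : ∀ i, N ≤ i → |v i - c| ≤ C * (i : ℝ)⁻¹) :
    Tendsto v atTop (𝓝 c) := by
  rw [tendsto_iff_dist_tendsto_zero]
  have h0 : Tendsto (fun i : ℕ => C * (i : ℝ)⁻¹) atTop (𝓝 0) := by
    have h1 : Tendsto (fun i : ℕ => ((i : ℝ))⁻¹) atTop (𝓝 0) :=
      tendsto_inv_atTop_zero.comp tendsto_natCast_atTop_atTop
    simpa using h1.const_mul C
  refine squeeze_zero' ?_ ?_ h0
  · exact Eventually.of_forall fun i => dist_nonneg
  · filter_upwards [eventually_ge_atTop N] with i hi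
    simpa [Real.dist_eq] using h i hi

def auxHistSeq {α : Type*} (step : List α → α) : ℕ → List α
  | 0 => []
  | n + 1 => auxHistSeq step n ++ [step (auxHistSeq step n)]

lemma auxHistSeq_eq {α : Type*} (step : List α → α) (n : ℕ) :
    auxHistSeq step n = (List.range n).map (fun m => step (auxHistSeq step m)) := by
  induction n with
  | zero => simp [auxHistSeq]
  | succ n ih => rw [auxHistSeq, ih, List.range_succ, List.map_append]; simp [ih]

lemma auxHistSeq_length {α : Type*} (step : List α → α) (n : ℕ) :
    (auxHistSeq step n).length = n := by
  rw [auxHistSeq_eq]; simp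

lemma auxHistSeq_getD {α : Type*} (step : List α → α) (d : α) {n j : ℕ} (hj : j < n) :
    (auxHistSeq step n).getD j d = step (auxHistSeq step j) := by
  have h1 : j < ((List.range n).map (fun m => step (auxHistSeq step m))).length := by
    simpa using hj
  rw [auxHistSeq_eq, List.getD_eq_getElem _ _ h1, List.getElem_map, List.getElem_range]

lemma aux_pseudocompact_closure {X : Type*} [TopologicalSpace X] [T35Space X]
    (hp : IsPseudocompact X) (V : ℕ → Set X) (hop : ∀ n, IsOpen (V n))
    (hne : ∀ n, (V n).Nonempty) (hdec : ∀ m n, m ≤ n → V n ⊆ V m) :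
    (⋂ n, closure (V n)).Nonempty := by
  by_contra hcon
  rw [Set.not_nonempty_iff_eq_empty] at hcon
  choose p hpV using hne
  have hx : ∀ x : X, ∃ n, x ∉ closure (V n) := by
    intro x
    by_contra hx
    push_neg at hx
    exact absurd hcon (Set.Nonempty.ne_empty ⟨x, Set.mem_iInter.2 hx⟩)
  have hsep : ∀ n, ∃ g : X → ℝ, Continuous g ∧ g (p n) = 1 ∧ (∀ x, x ∉ V n → g x = 0) ∧
      ∀ x, 0 ≤ g x ∧ g x ≤ 1 := by
    intro n
    obtain ⟨φ, hφc, hφ0, hφ1⟩ := CompletelyRegularSpace.completely_regular (p n) (V n)ᶜ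
      (hop n).isClosed_compl (by simp [hpV n])
    refine ⟨fun x => 1 - (φ x : ℝ), ?_, by simp [hφ0], ?_, ?_⟩
    · exact continuous_const.sub (continuous_subtype_val.comp hφc)
    · intro x hx
      have h1 : φ x = 1 := hφ1 hx
      simp [h1]
    · intro x
      have h1 := (φ x).2.1
      have h2 := (φ x).2.2
      constructor
      · simp only
        linarith
      · simp only
        linarith
  choose g hgc hg1 hg0 hgb using hsep
  set h : X → ℝ := fun x => ∑ᶠ n : ℕ, (n : ℝ) * g n x with hh
  have hsupp : ∀ n : ℕ, Function.support (fun x => (n : ℝ) * g n x) ⊆ V n := by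
    intro n x hxs
    by_contra hxV
    exact hxs (by simp [hg0 n x hxV])
  have hlf : LocallyFinite fun n : ℕ => Function.support fun x => (n : ℝ) * g n x := by
    intro x
    obtain ⟨N, hN⟩ := hx x
    refine ⟨(closure (V N))ᶜ, (isClosed_closure.isOpen_compl).mem_nhds (by simpa using hN), ?_⟩
    apply Set.Finite.subset (Set.finite_Iio N)
    intro n hn
    simp only [Set.mem_setOf_eq] at hn
    by_contra hnN
    simp only [Set.mem_Iio, not_lt] at hnN
    obtain ⟨z, hz1, hz2⟩ := hn
    exact hz2 (subset_closure (hdec N n hnN (hsupp n hz1)))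
  have hhc : Continuous h := continuous_finsum (fun n => continuous_const.mul (hgc n)) hlf
  obtain ⟨M, hM⟩ := hp h hhc
  obtain ⟨n, hn⟩ := exists_nat_gt M
  have hfin : (Function.support fun m : ℕ => (m : ℝ) * g m (p n)).Finite := by
    apply Set.Finite.subset (hlf.point_finite (p n))
    intro m hm
    simpa [Function.mem_support] using hm
  have hle : (n : ℝ) * g n (p n) ≤ h (p n) :=
    single_le_finsum n hfin fun m => mul_nonneg (Nat.cast_nonneg m) (hgb m (p n)).1
  rw [hg1 n, mul_one] at hle
  have := hM (p n)
  have h2 := le_abs_self (h (p n))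
  linarith

lemma aux_grothendieck_pseudocompact {X : Type*} [TopologicalSpace X]
    (hX : ∀ F : X → {g : X → ℝ // Continuous g}, Continuous F →
      IsCompact (closure (Set.range F))) :
    IsPseudocompact X := by
  intro h hc
  rcases isEmpty_or_nonempty X with hE | hNE
  · exact ⟨0, fun x => isEmptyElim x⟩
  · set F : X → {g : X → ℝ // Continuous g} := fun x => ⟨fun _ => h x, continuous_const⟩ with hF
    have hFc : Continuous F := Continuous.subtype_mk (continuous_pi fun _ => hc) _
    have hK := hX F hFc
    set x₁ := Classical.arbitrary X
    have he : Continuous fun g : {g : X → ℝ // Continuous g} => g.1 x₁ :=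
      (continuous_apply x₁).comp continuous_subtype_val
    have himg : IsCompact ((fun g : {g : X → ℝ // Continuous g} => g.1 x₁) '' closure (Set.range F)) :=
      hK.image he
    obtain ⟨M, hM⟩ := isBounded_iff_forall_norm_le.1 himg.isBounded
    refine ⟨M, fun x => ?_⟩
    have hmem : h x ∈ (fun g : {g : X → ℝ // Continuous g} => g.1 x₁) '' closure (Set.range F) :=
      ⟨F x, subset_closure (Set.mem_range_self x), rfl⟩
    simpa [Real.norm_eq_abs] using hM _ hmem

lemma aux_key_continuity {X Y : Type*} [TopologicalSpace X] [TopologicalSpace Y] [T35Space X]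
    (hX : GrothendieckPair X X) (hXp : IsPseudocompact X)
    (f : X → Y) (hf : Continuous f) (hsurj : Function.Surjective f)
    (F : Y → Cp Y) (hF : Continuous F)
    (q : Y → ℝ) (hq : q ∈ closure (Set.range fun a => (F a).1)) :
    Continuous q := by
  classical
  rw [continuous_iff_continuousAt]
  intro y₀
  rw [ContinuousAt, Metric.tendsto_nhds]
  by_contra hcon
  push_neg at hcon
  obtain ⟨ε, hε, hcon⟩ := hcon
  have hcon : ∃ᶠ x in 𝓝 y₀, ¬ dist (q x) (q y₀) < ε := hcon.mono fun _ h => not_lt.2 h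
  have hwit : ∀ V ∈ 𝓝 y₀, ∃ yy ∈ V, ε ≤ dist (q yy) (q y₀) := by
    intro V hV
    obtain ⟨yy, h1, h2⟩ := (hcon.and_eventually hV).exists
    exact ⟨yy, h2, not_lt.1 h1⟩
  set d : Y × Y := (y₀, y₀) with hd
  -- the one-step choice
  have hstep : ∀ l : List (Y × Y), ∃ pp : Y × Y,
      (l = [] → pp = (y₀, y₀)) ∧
      (l ≠ [] →
        ((∀ j < l.length,
            |(F pp.1).1 ((l.getD j d).2) - q ((l.getD j d).2)| < (l.length : ℝ)⁻¹) ∧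
         ε ≤ dist (q pp.2) (q y₀) ∧
         (∀ i, 1 ≤ i → i ≤ l.length →
            |(F (if i = l.length then pp.1 else (l.getD i d).1)).1 pp.2
              - (F (if i = l.length then pp.1 else (l.getD i d).1)).1 y₀|
              < (l.length : ℝ)⁻¹))) := by
    intro l
    rcases eq_or_ne l [] with rfl | hl
    · exact ⟨(y₀, y₀), fun _ => rfl, fun hcc => absurd rfl hcc⟩
    · set n := l.length with hn
      have hn0 : 0 < n := List.length_pos_iff.2 hl
      have hninv : (0 : ℝ) < (n : ℝ)⁻¹ := by positivity
      -- choose a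
      have hO : ∃ a : Y, ∀ j < n, |(F a).1 ((l.getD j d).2) - q ((l.getD j d).2)| < (n : ℝ)⁻¹ := by
        set O : Set (Y → ℝ) := ⋂ j ∈ Finset.range n,
          (fun g : Y → ℝ => g ((l.getD j d).2)) ⁻¹' Metric.ball (q ((l.getD j d).2)) (n : ℝ)⁻¹
          with hO
        have hOopen : IsOpen O :=
          isOpen_biInter_finset fun j _ => Metric.isOpen_ball.preimage (continuous_apply ((l.getD j d).2))
        have hqO : q ∈ O := by
          refine Set.mem_iInter₂.2 fun j _ => ?_
          simp [Metric.mem_ball, hninv]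
        obtain ⟨g, hgO, hgS⟩ := _root_.mem_closure_iff.1 hq O hOopen hqO
        obtain ⟨a, rfl⟩ := hgS
        refine ⟨a, fun j hj => ?_⟩
        have := Set.mem_iInter₂.1 hgO j (Finset.mem_range.2 hj)
        simpa [Real.dist_eq] using this
      obtain ⟨a, ha⟩ := hO
      set aa : ℕ → Y := fun i => if i = n then a else (l.getD i d).1 with haa
      set V : Set Y := ⋂ i ∈ Finset.Icc 1 n,
        (fun yy => (F (aa i)).1 yy) ⁻¹' Metric.ball ((F (aa i)).1 y₀) (n : ℝ)⁻¹ with hV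
      have hVopen : IsOpen V :=
        isOpen_biInter_finset fun i _ => Metric.isOpen_ball.preimage (F (aa i)).2
      have hy₀V : y₀ ∈ V := by
        refine Set.mem_iInter₂.2 fun i _ => ?_
        simp [Metric.mem_ball, hninv]
      obtain ⟨yy, hyyV, hyyd⟩ := hwit V (hVopen.mem_nhds hy₀V)
      refine ⟨(a, yy), fun hcc => absurd hcc hl, fun _ => ⟨ha, hyyd, fun i h1 h2 => ?_⟩⟩
      have := Set.mem_iInter₂.1 hyyV i (Finset.mem_Icc.2 ⟨h1, h2⟩)
      simpa [aa, Real.dist_eq] using this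
  choose step hstep0 hstep1 using hstep
  set s : ℕ → Y × Y := fun m => step (auxHistSeq step m) with hs
  set a : ℕ → Y := fun m => (s m).1 with haf
  set y : ℕ → Y := fun m => (s m).2 with hyf
  have hy0 : y 0 = y₀ := by
    have h0 : auxHistSeq step 0 = [] := rfl
    have := hstep0 (auxHistSeq step 0) h0
    simp only [hyf, hs, this]
  have hS : ∀ n, 1 ≤ n →
      (∀ j < n, |(F (a n)).1 (y j) - q (y j)| < (n : ℝ)⁻¹) ∧
      ε ≤ dist (q (y n)) (q y₀) ∧
      (∀ i, 1 ≤ i → i ≤ n → |(F (a i)).1 (y n) - (F (a i)).1 y₀| < (n : ℝ)⁻¹) := by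
    intro n hn
    have hlen := auxHistSeq_length step n
    have hne : auxHistSeq step n ≠ [] := by
      intro hcc
      rw [hcc] at hlen
      simp at hlen
      omega
    have H := hstep1 (auxHistSeq step n) hne
    rw [hlen] at H
    obtain ⟨H1, H2, H3⟩ := H
    refine ⟨fun j hj => ?_, H2, fun i h1 h2 => ?_⟩
    · have := H1 j hj
      rwa [auxHistSeq_getD step d hj] at this
    · have := H3 i h1 h2
      rcases eq_or_lt_of_le h2 with rfl | hlt
      · simpa using this
      · rw [if_neg (by omega), auxHistSeq_getD step d hlt] at this
        exact this
  -- move to X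
  set σ : Y → X := Function.surjInv hsurj with hσf
  have hσ : ∀ yy, f (σ yy) = yy := fun yy => Function.surjInv_eq hsurj yy
  set u : ℕ → X := fun i => σ (a i) with hu
  set x : ℕ → X := fun n => σ (y n) with hxx
  set G : X → Cp X := fun v => ⟨fun w => (F (f v)).1 (f w), (F (f v)).2.comp hf⟩ with hG
  have hGc : Continuous G := by
    apply Continuous.subtype_mk
    exact continuous_pi fun w =>
      (continuous_apply (f w)).comp ((continuous_subtype_val.comp hF).comp hf)
  have hK : IsCompact (closure (Set.range G)) := hX G hGc
  have hmem : Filter.map (fun i => G (u i)) Filter.atTop ≤ Filter.principal (closure (Set.range G)) := by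
    rw [Filter.le_principal_iff, Filter.mem_map]
    exact Filter.univ_mem' fun i => subset_closure (Set.mem_range_self _)
  obtain ⟨ρ, hρK, hρ⟩ := hK.exists_clusterPt hmem
  have heval : ∀ (w : X) (c : ℝ),
      Tendsto (fun i => (F (a i)).1 (f w)) atTop (𝓝 c) → ρ.1 w = c := by
    intro w c hc
    have hcont : ContinuousAt (fun g : Cp X => g.1 w) ρ :=
      ((continuous_apply w).comp continuous_subtype_val).continuousAt
    have h1 : ClusterPt (ρ.1 w)
        (Filter.map (fun g : Cp X => g.1 w) (Filter.map (fun i => G (u i)) Filter.atTop)) :=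
      hρ.map hcont tendsto_map
    rw [Filter.map_map] at h1
    have h2 : ((fun g : Cp X => g.1 w) ∘ fun i => G (u i)) = fun i => (F (a i)).1 (f w) := by
      funext i
      simp only [Function.comp_apply, hG, hu, hσ]
      rfl
    rw [h2] at h1
    exact eq_of_nhds_neBot (h1.mono hc)
  have hT1 : ∀ n : ℕ, ρ.1 (x n) = q (y n) := by
    intro n
    apply heval
    rw [show f (x n) = y n from hσ _]
    apply aux_tendsto_of_abs_le_inv (N := n + 1) (C := 1)
    intro i hi
    have h1 : 1 ≤ i := le_trans (by omega) hi
    have := ((hS i h1).1 n (by omega)).le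
    simpa using this
  have hbeta : ∀ i, 1 ≤ i → |(F (a i)).1 y₀ - q y₀| < (i : ℝ)⁻¹ := by
    intro i hi
    have := (hS i hi).1 0 hi
    rwa [hy0] at this
  set A : ℕ → Set X := fun i =>
    (fun w => (F (a i)).1 (f w)) ⁻¹' Metric.ball ((F (a i)).1 y₀) (i : ℝ)⁻¹ with hA
  have hAopen : ∀ i, IsOpen (A i) := fun i => Metric.isOpen_ball.preimage ((F (a i)).2.comp hf)
  have hAx : ∀ i n, 1 ≤ i → i ≤ n → x n ∈ A i := by
    intro i n h1 h2
    have h3 := (hS n (le_trans h1 h2)).2.2 i h1 h2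
    simp only [hA, Set.mem_preimage, Metric.mem_ball, Real.dist_eq]
    rw [show f (x n) = y n from hσ _]
    refine lt_of_lt_of_le h3 ?_
    apply inv_anti₀
    · exact_mod_cast h1
    · exact_mod_cast h2
  set B : Set X := (fun w => |ρ.1 w - q y₀|) ⁻¹' Set.Ioi (ε / 2) with hB
  have hcontB : Continuous fun w => |ρ.1 w - q y₀| := (ρ.2.sub continuous_const).abs
  have hBopen : IsOpen B := isOpen_Ioi.preimage hcontB
  have hBx : ∀ n, 1 ≤ n → x n ∈ B := by
    intro n hn
    simp only [hB, Set.mem_preimage, Set.mem_Ioi]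
    rw [hT1 n]
    have := (hS n hn).2.1
    rw [Real.dist_eq] at this
    linarith
  set W : ℕ → Set X := fun n => B ∩ ⋂ i ∈ Finset.Icc 1 n, A i with hW
  have hWopen : ∀ n, IsOpen (W n) :=
    fun n => hBopen.inter (isOpen_biInter_finset fun i _ => hAopen i)
  have hWne : ∀ n, (W n).Nonempty := by
    intro n
    refine ⟨x (n + 1), hBx (n + 1) (by omega), ?_⟩
    exact Set.mem_iInter₂.2 fun i hi =>
      hAx i (n + 1) (Finset.mem_Icc.1 hi).1 (le_trans (Finset.mem_Icc.1 hi).2 (by omega))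
  have hWdec : ∀ m n, m ≤ n → W n ⊆ W m := by
    intro m n hmn w hw
    refine ⟨hw.1, Set.mem_iInter₂.2 fun i hi => ?_⟩
    exact Set.mem_iInter₂.1 hw.2 i
      (Finset.mem_Icc.2 ⟨(Finset.mem_Icc.1 hi).1, le_trans (Finset.mem_Icc.1 hi).2 hmn⟩)
  obtain ⟨xb, hxb⟩ := aux_pseudocompact_closure hXp W hWopen hWne hWdec
  rw [Set.mem_iInter] at hxb
  have hxbB : ε / 2 ≤ |ρ.1 xb - q y₀| := by
    have h1 : xb ∈ closure B := closure_mono Set.inter_subset_left (hxb 0)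
    have h2 : closure B ⊆ (fun w => |ρ.1 w - q y₀|) ⁻¹' Set.Ici (ε / 2) :=
      closure_minimal (fun w hw => Set.mem_preimage.2 (Set.mem_Ici.2
        (le_of_lt (Set.mem_Ioi.1 (Set.mem_preimage.1 hw))))) (isClosed_Ici.preimage hcontB)
    exact h2 h1
  have hxbA : ∀ i, 1 ≤ i → |(F (a i)).1 (f xb) - (F (a i)).1 y₀| ≤ (i : ℝ)⁻¹ := by
    intro i hi
    have hWA : W i ⊆ A i := fun w hw =>
      Set.mem_iInter₂.1 hw.2 i (Finset.mem_Icc.2 ⟨hi, le_refl i⟩)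
    have h1 : xb ∈ closure (A i) := closure_mono hWA (hxb i)
    have h2 : closure (A i) ⊆
        (fun w => (F (a i)).1 (f w)) ⁻¹' Metric.closedBall ((F (a i)).1 y₀) (i : ℝ)⁻¹ :=
      closure_minimal (fun w hw => Set.mem_preimage.2
          (Metric.ball_subset_closedBall (Set.mem_preimage.1 hw)))
        (Metric.isClosed_closedBall.preimage ((F (a i)).2.comp hf))
    have := h2 h1
    simpa [Real.dist_eq] using this
  have hxbT : Tendsto (fun i => (F (a i)).1 (f xb)) atTop (𝓝 (q y₀)) := by
    apply aux_tendsto_of_abs_le_inv (N := 1) (C := 2)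
    intro i hi
    have h1 := hxbA i hi
    have h2 := (hbeta i hi).le
    have h3 : |(F (a i)).1 (f xb) - q y₀| ≤
        |(F (a i)).1 (f xb) - (F (a i)).1 y₀| + |(F (a i)).1 y₀ - q y₀| := abs_sub_le _ _ _
    have : (2 : ℝ) * (i : ℝ)⁻¹ = (i : ℝ)⁻¹ + (i : ℝ)⁻¹ := by ring
    linarith
  have hfin := heval xb (q y₀) hxbT
  rw [hfin] at hxbB
  simp at hxbB
  linarith


theorem grothendieck_pair_of_continuous_surjection
    {X Y : Type*} [TopologicalSpace X] [TopologicalSpace Y] [T35Space X] [T35Space Y]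
    (hX : GrothendieckPair X X)
    (f : X → Y) (hf : Continuous f) (hsurj : Function.Surjective f) :
    GrothendieckPair Y Y := by
  intro F hF
  rcases isEmpty_or_nonempty Y with hE | hNE
  · have hsub : Subsingleton (Cp Y) :=
      ⟨fun g h => Subtype.ext (funext fun yy => isEmptyElim yy)⟩
    have : (closure (Set.range F)).Subsingleton := fun a _ b _ => Subsingleton.elim a b
    exact this.finite.isCompact
  · have hXp : IsPseudocompact X := aux_grothendieck_pseudocompact hX
    have hYp : IsPseudocompact Y := by
      intro g hg
      obtain ⟨M, hM⟩ := hXp (g ∘ f) (hg.comp hf)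
      exact ⟨M, fun yy => by obtain ⟨xx, rfl⟩ := hsurj yy; exact hM xx⟩
    set S : Set (Y → ℝ) := Set.range fun a => (F a).1 with hSdef
    have hcont : ∀ q ∈ closure S, Continuous q := fun q hq =>
      aux_key_continuity hX hXp f hf hsurj F hF q hq
    have hbound : ∀ yy : Y, ∃ M : ℝ, ∀ a : Y, |(F a).1 yy| ≤ M := fun yy =>
      hYp (fun a => (F a).1 yy) ((continuous_apply yy).comp (continuous_subtype_val.comp hF))
    choose M hM using hbound
    have hLsub : closure S ⊆ Set.pi Set.univ fun yy => Set.Icc (-(M yy)) (M yy) := by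
      apply closure_minimal
      · rintro g ⟨a, rfl⟩ yy _
        have := hM yy a
        rw [abs_le] at this
        exact ⟨by linarith [this.1], this.2⟩
      · exact isClosed_set_pi fun yy _ => isClosed_Icc
    have hLcomp : IsCompact (closure S) :=
      (isCompact_univ_pi fun yy => isCompact_Icc).of_isClosed_subset isClosed_closure hLsub
    have hind : Topology.IsInducing (fun g : Cp Y => g.1) := ⟨rfl⟩
    have hrange : closure S ⊆ Set.range (fun g : Cp Y => g.1) := fun g hg =>
      ⟨⟨g, hcont g hg⟩, rfl⟩
    have himg : (fun g : Cp Y => g.1) '' Set.range F = S := by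
      rw [← Set.range_comp]
      rfl
    have hclos : closure (Set.range F) = (fun g : Cp Y => g.1) ⁻¹' closure S := by
      rw [hind.closure_eq_preimage_closure_image, himg]
    rw [hclos]
    exact hind.isCompact_preimage' hLcomp hrange
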